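/- The ring C[x, x^{-1}, y, y^{-1}] of Laurent polynomials in two variables is integral over its subring C[x + x^{-1}, y + y^{-1}, xy + (xy)^{-1}]. -/

import Mathlib

open LaurentPolynomial

/-- The Laurent polynomial ring `ℂ[x,x⁻¹,y,y⁻¹]`, realized as Laurent
polynomials in `y` over Laurent polynomials in `x`. -/
abbrev TwoLaurent : Type := LaurentPolynomial (LaurentPolynomial ℂ)

noncomputable def Lx : TwoLaurent := LaurentPolynomial.C (LaurentPolynomial.T 1)
noncomputable def Lxinv : TwoLaurent := LaurentPolynomial.C (LaurentPolynomial.T (-1))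
noncomputable def Ly : TwoLaurent := LaurentPolynomial.T 1
noncomputable def Lyinv : TwoLaurent := LaurentPolynomial.T (-1)

/-- Any element `u` with an inverse `v` such that `u + v` lies in a subalgebra
is integral over it, via `X² - (u+v)X + 1`. -/
lemma quad_integral (A : Subalgebra ℂ TwoLaurent) {u v : TwoLaurent}
    (h1 : u * v = 1) (h2 : u + v ∈ A) : IsIntegral A u := by
  refine ⟨Polynomial.X ^ 2 + (Polynomial.C (-(⟨u + v, h2⟩ : A)) * Polynomial.X + 1), ?_, ?_⟩
  · refine Polynomial.monic_X_pow_add ?_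
    apply lt_of_le_of_lt (Polynomial.degree_add_le _ _)
    have h1' : Polynomial.degree (Polynomial.C (-(⟨u + v, h2⟩ : A)) * Polynomial.X) ≤ 1 := by
      apply le_trans (Polynomial.degree_mul_le _ _)
      calc Polynomial.degree (Polynomial.C (-(⟨u + v, h2⟩ : A)))
            + Polynomial.degree (Polynomial.X : Polynomial A)
          ≤ 0 + 1 := add_le_add Polynomial.degree_C_le Polynomial.degree_X_le
        _ = 1 := by norm_num
    have h2' : Polynomial.degree (1 : Polynomial A) ≤ 1 :=
      le_trans Polynomial.degree_one_le (by norm_num)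
    calc max (Polynomial.degree (Polynomial.C (-(⟨u + v, h2⟩ : A)) * Polynomial.X))
          (Polynomial.degree (1 : Polynomial A)) ≤ 1 := max_le h1' h2'
      _ < 2 := by norm_num
  · have halg : (algebraMap (↥A) TwoLaurent) (-(⟨u + v, h2⟩ : A)) = -(u + v) := rfl
    simp only [Polynomial.eval₂_add, Polynomial.eval₂_pow,
      Polynomial.eval₂_mul, Polynomial.eval₂_X, Polynomial.eval₂_C, Polynomial.eval₂_one, halg]
    linear_combination -h1

/-- `ℂ[x,x⁻¹,y,y⁻¹]` is integral over the subring
`ℂ[x+x⁻¹, y+y⁻¹, xy+(xy)⁻¹]`. -/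
theorem laurent_integral_over_trace_subring :
    ∀ f : TwoLaurent,
      IsIntegral
        (Algebra.adjoin ℂ
          ({Lx + Lxinv, Ly + Lyinv, Lx * Ly + Lxinv * Lyinv} : Set TwoLaurent)) f := by
  intro f
  set A := Algebra.adjoin ℂ
      ({Lx + Lxinv, Ly + Lyinv, Lx * Ly + Lxinv * Lyinv} : Set TwoLaurent) with hA
  set S := integralClosure A TwoLaurent with hS
  -- basic multiplicative identities
  have hxmul : Lx * Lxinv = 1 := by
    rw [Lx, Lxinv, ← map_mul, ← T_add]
    norm_num [T_zero]
  have hymul : Ly * Lyinv = 1 := by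
    rw [Ly, Lyinv, ← T_add]
    norm_num [T_zero]
  -- generator memberships
  have hxa : Lx + Lxinv ∈ A := Algebra.subset_adjoin (by simp)
  have hya : Ly + Lyinv ∈ A := Algebra.subset_adjoin (by simp)
  have hx : Lx ∈ S := quad_integral A hxmul hxa
  have hxi : Lxinv ∈ S := quad_integral A (by rw [mul_comm]; exact hxmul) (by rwa [add_comm])
  have hy : Ly ∈ S := quad_integral A hymul hya
  have hyi : Lyinv ∈ S := quad_integral A (by rw [mul_comm]; exact hymul) (by rwa [add_comm])
  -- T n ∈ S for all n
  have hT : ∀ n : ℤ, (LaurentPolynomial.T n : TwoLaurent) ∈ S := by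
    intro n
    induction n using Int.induction_on with
    | zero => simpa [T_zero] using S.one_mem
    | succ k ih =>
        rw [T_add]
        exact S.mul_mem ih hy
    | pred k ih =>
        rw [sub_eq_add_neg, T_add]
        exact S.mul_mem ih hyi
  have hCT : ∀ n : ℤ, (LaurentPolynomial.C (LaurentPolynomial.T n) : TwoLaurent) ∈ S := by
    intro n
    induction n using Int.induction_on with
    | zero => simpa [T_zero] using S.one_mem
    | succ k ih =>
        rw [T_add, map_mul]
        exact S.mul_mem ih hx
    | pred k ih =>
        rw [sub_eq_add_neg, T_add, map_mul]
        exact S.mul_mem ih hxi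
  -- scalars
  have hscal : ∀ a : ℂ, (LaurentPolynomial.C (LaurentPolynomial.C a) : TwoLaurent) ∈ S := by
    intro a
    have : (LaurentPolynomial.C (LaurentPolynomial.C a) : TwoLaurent)
        = algebraMap ℂ TwoLaurent a := by
      rw [LaurentPolynomial.algebraMap_apply, ← LaurentPolynomial.C_eq_algebraMap]
    rw [this, IsScalarTower.algebraMap_apply ℂ A TwoLaurent]
    exact S.algebraMap_mem _
  -- C q ∈ S for all q
  have hC : ∀ q : LaurentPolynomial ℂ, (LaurentPolynomial.C q : TwoLaurent) ∈ S := by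
    intro q
    induction q using LaurentPolynomial.induction_on' with
    | add p q hp hq => rw [map_add]; exact S.add_mem hp hq
    | C_mul_T n a => rw [map_mul]; exact S.mul_mem (hscal a) (hCT n)
  -- conclude
  show f ∈ S
  induction f using LaurentPolynomial.induction_on' with
  | add p q hp hq => exact S.add_mem hp hq
  | C_mul_T n a => exact S.mul_mem (hC a) (hT n)
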